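/- Let W ∈ ℝ^{n×n} be symmetric positive definite, (S_j, q_j)_{j=1}^m a finitely supported sketch distribution, f_1,…,f_n : ℝ^d → ℝ differentiable with f := (1/n)∑_i f_i, and x* ∈ ℝ^d. Let κ := λmin(W^{1/2}(∑_j q_j H_{S_j})W^{1/2}), and assume the expected smoothness of the Jacobian: there is L₂ > 0 such that ∑_j q_j ‖(∇F(x) − ∇F(x*)) Π_{S_j}‖²_{W⁻¹} ≤ 2L₂ (f(x) − f(x*)) for all x ∈ ℝ^d. Then for every J ∈ ℝ^{d×n} and every x ∈ ℝ^d, the Jacobian estimates J⁺_j := J(I − Π_{S_j}) + ∇F(x)Π_{S_j} satisfy ∑_j q_j ‖J⁺_j − ∇F(x*)‖²_{W⁻¹} ≤ (1 − κ)‖J − ∇F(x*)‖²_{W⁻¹} + 2L₂ (f(x) − f(x*)). -/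

import Mathlib

open Matrix

/-- Weighted Frobenius norm squared: ‖X‖²_{W⁻¹} = Tr(X W⁻¹ Xᵀ). -/
noncomputable def wnorm2 {d n : ℕ} (W : Matrix (Fin n) (Fin n) ℝ)
    (X : Matrix (Fin d) (Fin n) ℝ) : ℝ :=
  Matrix.trace (X * W⁻¹ * Xᵀ)

/-- Smallest eigenvalue of a (symmetric) real matrix, as the infimum of its real spectrum. -/
noncomputable def lammin {n : ℕ} (M : Matrix (Fin n) (Fin n) ℝ) : ℝ :=
  sInf (spectrum ℝ M)

/-- The (Euclidean) gradient of `f : ℝ^d → ℝ` at `x`, i.e. the vector of partial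
derivatives. -/
noncomputable def grad {d : ℕ} (f : (Fin d → ℝ) → ℝ) (x : Fin d → ℝ) : Fin d → ℝ :=
  fun k => fderiv ℝ f x (Pi.single k 1)

/-- The Jacobian `∇F(x) = [∇f₁(x), …, ∇fₙ(x)] ∈ ℝ^{d×n}`. -/
noncomputable def jac {d n : ℕ} (f : Fin n → (Fin d → ℝ) → ℝ) (x : Fin d → ℝ) :
    Matrix (Fin d) (Fin n) ℝ :=
  Matrix.of fun k i => grad (f i) x k

/- ### Auxiliary lemmas -/

lemma aux_trace_nonneg {n : ℕ} {P : Matrix (Fin n) (Fin n) ℝ} (hP : P.PosSemidef) :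
    0 ≤ P.trace := by
  rw [Matrix.trace]
  refine Finset.sum_nonneg fun i _ => ?_
  have h := hP.diag_nonneg (i := i)
  simpa [dotProduct, Matrix.mulVec, Pi.single_apply, Matrix.diag,
    Finset.mul_sum, mul_ite] using h

lemma aux_conjT_eq_transpose {k l : ℕ} (A : Matrix (Fin k) (Fin l) ℝ) : Aᴴ = Aᵀ := by
  ext i j; simp [Matrix.conjTranspose_apply]

lemma aux_posSemidef_sub_lammin {n : ℕ} {M : Matrix (Fin n) (Fin n) ℝ}
    (hM : M.IsHermitian) :
    (M - lammin M • (1 : Matrix (Fin n) (Fin n) ℝ)).PosSemidef := by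
  have hbdd : BddBelow (spectrum ℝ M) := (Matrix.finite_spectrum M).bddBelow
  have hev : ∀ i, lammin M ≤ hM.eigenvalues i := fun i =>
    csInf_le hbdd (hM.eigenvalues_mem_spectrum_real i)
  have hdiag : (Matrix.diagonal (fun i => hM.eigenvalues i - lammin M)).PosSemidef :=
    Matrix.posSemidef_diagonal_iff.mpr fun i => by linarith [hev i]
  have h := hdiag.mul_mul_conjTranspose_same
    (hM.eigenvectorUnitary : Matrix (Fin n) (Fin n) ℝ)
  have hU : (hM.eigenvectorUnitary : Matrix (Fin n) (Fin n) ℝ) *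
      star (hM.eigenvectorUnitary : Matrix (Fin n) (Fin n) ℝ) = 1 :=
    (Matrix.mem_unitaryGroup_iff).mp hM.eigenvectorUnitary.2
  have hdd : Matrix.diagonal (fun i => hM.eigenvalues i - lammin M) =
      Matrix.diagonal (RCLike.ofReal ∘ hM.eigenvalues) -
        lammin M • (1 : Matrix (Fin n) (Fin n) ℝ) := by
    ext i j
    by_cases hij : i = j <;>
      simp [Matrix.diagonal_apply, Matrix.one_apply, hij]
  rw [hdd] at h
  have hexp : (hM.eigenvectorUnitary : Matrix (Fin n) (Fin n) ℝ) *
      (Matrix.diagonal (RCLike.ofReal ∘ hM.eigenvalues) -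
        lammin M • (1 : Matrix (Fin n) (Fin n) ℝ)) *
      (hM.eigenvectorUnitary : Matrix (Fin n) (Fin n) ℝ)ᴴ =
      M - lammin M • (1 : Matrix (Fin n) (Fin n) ℝ) := by
    rw [Matrix.mul_sub, Matrix.sub_mul, Matrix.mul_smul, Matrix.smul_mul, Matrix.mul_one,
      ← Matrix.star_eq_conjTranspose, hU, ← Unitary.conjStarAlgAut_apply (S := ℝ), ← hM.spectral_theorem]
  rwa [hexp] at h

lemma aux_trace_ge_lammin {d n : ℕ} (M : Matrix (Fin n) (Fin n) ℝ)
    (hM : M.IsHermitian) (A : Matrix (Fin d) (Fin n) ℝ) :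
    lammin M * (A * Aᵀ).trace ≤ (A * M * Aᵀ).trace := by
  have h := aux_trace_nonneg ((aux_posSemidef_sub_lammin hM).mul_mul_conjTranspose_same A)
  rw [aux_conjT_eq_transpose] at h
  have hexp : A * (M - lammin M • (1 : Matrix (Fin n) (Fin n) ℝ)) * Aᵀ =
      A * M * Aᵀ - lammin M • (A * Aᵀ) := by
    rw [Matrix.mul_sub, Matrix.sub_mul, Matrix.mul_smul, Matrix.smul_mul, Matrix.mul_one]
  rw [hexp, Matrix.trace_sub, Matrix.trace_smul, smul_eq_mul] at h
  linarith

theorem jacobian_estimate_contraction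
    {d n m : ℕ}
    (W Wh : Matrix (Fin n) (Fin n) ℝ) (hW : W.PosDef)
    (hWh : Wh.PosDef) (hWh2 : Wh * Wh = W)
    (τs : Fin m → ℕ) (S : ∀ j, Matrix (Fin n) (Fin (τs j)) ℝ)
    (hS : ∀ j, IsUnit ((S j)ᵀ * W * S j))
    (q : Fin m → ℝ) (hq : ∀ j, 0 ≤ q j) (hq1 : ∑ j, q j = 1)
    (Pr H : Fin m → Matrix (Fin n) (Fin n) ℝ)
    (hPr : ∀ j, Pr j = S j * ((S j)ᵀ * W * S j)⁻¹ * (S j)ᵀ * W)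
    (hH : ∀ j, H j = S j * ((S j)ᵀ * W * S j)⁻¹ * (S j)ᵀ)
    (f : Fin n → (Fin d → ℝ) → ℝ) (hdiff : ∀ i, Differentiable ℝ (f i))
    (fbar : (Fin d → ℝ) → ℝ) (hfbar : ∀ x, fbar x = (1 / (n : ℝ)) * ∑ i, f i x)
    (xs : Fin d → ℝ)
    (κ : ℝ) (hκ : κ = lammin (Wh * (∑ j, q j • H j) * Wh))
    (L₂ : ℝ) (hL₂pos : 0 < L₂)
    (hES2 : ∀ x : Fin d → ℝ,
      ∑ j, q j * wnorm2 W ((jac f x - jac f xs) * Pr j)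
        ≤ 2 * L₂ * (fbar x - fbar xs)) :
    ∀ (J : Matrix (Fin d) (Fin n) ℝ) (x : Fin d → ℝ),
      ∑ j, q j * wnorm2 W (J * (1 - Pr j) + jac f x * Pr j - jac f xs)
        ≤ (1 - κ) * wnorm2 W (J - jac f xs) + 2 * L₂ * (fbar x - fbar xs) := by
  intro J x
  -- basic symmetry / invertibility facts
  have hWt : Wᵀ = W := by rw [← aux_conjT_eq_transpose]; exact hW.1
  have hWht : Whᵀ = Wh := by rw [← aux_conjT_eq_transpose]; exact hWh.1
  have hWdet : IsUnit W.det := hW.det_pos.ne'.isUnit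
  have hWhdet : IsUnit Wh.det := hWh.det_pos.ne'.isUnit
  have hWinv : W * W⁻¹ = 1 := Matrix.mul_nonsing_inv _ hWdet
  have hWinv' : W⁻¹ * W = 1 := Matrix.nonsing_inv_mul _ hWdet
  have hWhinv : Wh * Wh⁻¹ = 1 := Matrix.mul_nonsing_inv _ hWhdet
  have hWhinv' : Wh⁻¹ * Wh = 1 := Matrix.nonsing_inv_mul _ hWhdet
  have hWhinvt : Wh⁻¹ᵀ = Wh⁻¹ := by rw [Matrix.transpose_nonsing_inv, hWht]
  have hWinvWh : W⁻¹ = Wh⁻¹ * Wh⁻¹ := by rw [← hWh2, Matrix.mul_inv_rev]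
  -- associativity-normalizing rewrite helpers
  have e1 : ∀ {k : ℕ} (Z : Matrix (Fin n) (Fin k) ℝ), W⁻¹ * (W * Z) = Z := fun Z => by
    rw [← Matrix.mul_assoc, hWinv', Matrix.one_mul]
  have e2 : ∀ {k : ℕ} (Z : Matrix (Fin n) (Fin k) ℝ), W * (W⁻¹ * Z) = Z := fun Z => by
    rw [← Matrix.mul_assoc, hWinv, Matrix.one_mul]
  have eh1 : ∀ {k : ℕ} (Z : Matrix (Fin n) (Fin k) ℝ), Wh⁻¹ * (Wh * Z) = Z := fun Z => by
    rw [← Matrix.mul_assoc, hWhinv', Matrix.one_mul]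
  have eh2 : ∀ {k : ℕ} (Z : Matrix (Fin n) (Fin k) ℝ), Wh * (Wh⁻¹ * Z) = Z := fun Z => by
    rw [← Matrix.mul_assoc, hWhinv, Matrix.one_mul]
  -- facts about H j
  have hHt : ∀ j, (H j)ᵀ = H j := by
    intro j
    have hAt : ((S j)ᵀ * W * S j)ᵀ = (S j)ᵀ * W * S j := by
      rw [Matrix.transpose_mul, Matrix.transpose_mul, Matrix.transpose_transpose, hWt,
        Matrix.mul_assoc]
    rw [hH j, Matrix.transpose_mul, Matrix.transpose_mul, Matrix.transpose_transpose,
      Matrix.transpose_nonsing_inv, hAt, Matrix.mul_assoc]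
    exact (Matrix.mul_assoc _ _ _).symm
  have hHWH : ∀ j, H j * W * H j = H j := by
    intro j
    have hAdet : IsUnit ((S j)ᵀ * W * S j).det := (Matrix.isUnit_iff_isUnit_det _).mp (hS j)
    have hAinv : ((S j)ᵀ * W * S j)⁻¹ * ((S j)ᵀ * W * S j) = 1 :=
      Matrix.nonsing_inv_mul _ hAdet
    rw [hH j]
    calc S j * ((S j)ᵀ * W * S j)⁻¹ * (S j)ᵀ * W * (S j * ((S j)ᵀ * W * S j)⁻¹ * (S j)ᵀ)
        = S j * (((S j)ᵀ * W * S j)⁻¹ * ((S j)ᵀ * W * S j)) * (((S j)ᵀ * W * S j)⁻¹ * (S j)ᵀ) := by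
          simp only [Matrix.mul_assoc]
      _ = S j * ((S j)ᵀ * W * S j)⁻¹ * (S j)ᵀ := by
          rw [hAinv, Matrix.mul_one, Matrix.mul_assoc]
          exact (Matrix.mul_assoc _ _ _).symm
  have hPrH : ∀ j, Pr j = H j * W := by
    intro j; rw [hPr j, hH j]
  -- abbreviations
  set R : Matrix (Fin d) (Fin n) ℝ := J - jac f xs with hR
  set D : Matrix (Fin d) (Fin n) ℝ := jac f x - jac f xs with hD
  -- per-j expansion
  have hsummand : ∀ j,
      wnorm2 W (J * (1 - Pr j) + jac f x * Pr j - jac f xs)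
        = wnorm2 W R - (R * H j * Rᵀ).trace + wnorm2 W (D * Pr j) := by
    intro j
    have hXeq : J * (1 - Pr j) + jac f x * Pr j - jac f xs
        = R * (1 - Pr j) + D * Pr j := by
      rw [hR, hD]
      simp only [Matrix.mul_sub, Matrix.sub_mul, Matrix.mul_one]
      abel
    have e3 : ∀ (Z : Matrix (Fin n) (Fin d) ℝ), H j * (W * (H j * Z)) = H j * Z := fun Z => by
      rw [← Matrix.mul_assoc, ← Matrix.mul_assoc, hHWH j]
    have hexp : (R * (1 - Pr j) + D * Pr j) * W⁻¹ * (R * (1 - Pr j) + D * Pr j)ᵀ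
        = R * W⁻¹ * Rᵀ - R * (H j * Rᵀ) + D * (H j * Dᵀ) := by
      rw [hPrH j]
      simp only [Matrix.transpose_add, Matrix.transpose_mul, Matrix.transpose_sub,
        Matrix.transpose_one, hWt, hHt j, Matrix.sub_mul, Matrix.mul_sub, Matrix.add_mul,
        Matrix.mul_add, Matrix.mul_one, Matrix.one_mul, Matrix.mul_assoc, e1, e2, e3]
      abel
    have hDP : D * Pr j * W⁻¹ * (D * Pr j)ᵀ = D * (H j * Dᵀ) := by
      rw [hPrH j]
      simp only [Matrix.transpose_mul, hWt, hHt j, Matrix.mul_assoc, e1, e2, e3]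
    calc wnorm2 W (J * (1 - Pr j) + jac f x * Pr j - jac f xs)
        = ((R * (1 - Pr j) + D * Pr j) * W⁻¹ * (R * (1 - Pr j) + D * Pr j)ᵀ).trace := by
          rw [← hXeq]; rfl
      _ = (R * W⁻¹ * Rᵀ).trace - (R * (H j * Rᵀ)).trace + (D * (H j * Dᵀ)).trace := by
          rw [hexp, Matrix.trace_add, Matrix.trace_sub]
      _ = wnorm2 W R - (R * H j * Rᵀ).trace + wnorm2 W (D * Pr j) := by
          simp only [wnorm2, hDP]
          simp only [Matrix.mul_assoc]
  -- weighted sum of traces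
  have hsumtrace : ∑ j, q j * (R * H j * Rᵀ).trace
      = (R * (∑ j, q j • H j) * Rᵀ).trace := by
    rw [Matrix.mul_sum, Matrix.sum_mul, Matrix.trace_sum]
    refine Finset.sum_congr rfl fun j _ => ?_
    rw [Matrix.mul_smul, Matrix.smul_mul, Matrix.trace_smul, smul_eq_mul]
  -- spectral lower bound
  have hkey : κ * wnorm2 W R ≤ (R * (∑ j, q j • H j) * Rᵀ).trace := by
    have hHbar : (∑ j, q j • H j)ᵀ = ∑ j, q j • H j := by
      rw [Matrix.transpose_sum]
      refine Finset.sum_congr rfl fun j _ => ?_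
      rw [Matrix.transpose_smul, hHt j]
    have hMt : (Wh * (∑ j, q j • H j) * Wh)ᵀ = Wh * (∑ j, q j • H j) * Wh := by
      rw [Matrix.transpose_mul, Matrix.transpose_mul, hWht, hHbar, Matrix.mul_assoc]
    have hMherm : (Wh * (∑ j, q j • H j) * Wh).IsHermitian := by
      rw [Matrix.IsHermitian, aux_conjT_eq_transpose]; exact hMt
    have h := aux_trace_ge_lammin _ hMherm (R * Wh⁻¹)
    have hAMA : R * Wh⁻¹ * (Wh * (∑ j, q j • H j) * Wh) * (R * Wh⁻¹)ᵀ
        = R * (∑ j, q j • H j) * Rᵀ := by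
      simp only [Matrix.transpose_mul, hWhinvt, Matrix.mul_assoc, eh1, eh2]
    have hAA : R * Wh⁻¹ * (R * Wh⁻¹)ᵀ = R * W⁻¹ * Rᵀ := by
      simp only [Matrix.transpose_mul, hWhinvt, hWinvWh, Matrix.mul_assoc]
    rw [hAMA, hAA] at h
    rw [hκ, wnorm2]
    exact h
  -- combine
  have hES := hES2 x
  have hsum : ∑ j, q j * wnorm2 W (J * (1 - Pr j) + jac f x * Pr j - jac f xs)
      = wnorm2 W R - (R * (∑ j, q j • H j) * Rᵀ).trace + ∑ j, q j * wnorm2 W (D * Pr j) := by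
    calc ∑ j, q j * wnorm2 W (J * (1 - Pr j) + jac f x * Pr j - jac f xs)
        = ∑ j, (q j * wnorm2 W R - q j * (R * H j * Rᵀ).trace + q j * wnorm2 W (D * Pr j)) := by
          refine Finset.sum_congr rfl fun j _ => ?_
          rw [hsummand j]; ring
      _ = (∑ j, q j) * wnorm2 W R - ∑ j, q j * (R * H j * Rᵀ).trace
            + ∑ j, q j * wnorm2 W (D * Pr j) := by
          rw [Finset.sum_add_distrib, Finset.sum_sub_distrib, Finset.sum_mul]
      _ = wnorm2 W R - (R * (∑ j, q j • H j) * Rᵀ).trace + ∑ j, q j * wnorm2 W (D * Pr j) := by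
          rw [hq1, one_mul, hsumtrace]
  rw [hsum]
  have hDPr : ∑ j, q j * wnorm2 W (D * Pr j) ≤ 2 * L₂ * (fbar x - fbar xs) := hES
  nlinarith [hkey, hDPr]
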